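/- Every polynomial in the entries of a 2×2×2 array that is invariant under the action of SL₂(ℂ) × SL₂(ℂ) × SL₂(ℂ) is a polynomial in Cayley's hyperdeterminant: if f ∈ P is invariant, then f belongs to the ℂ-subalgebra of P generated by Det (i.e. f ∈ Algebra.adjoin ℂ {Det}). -/

import Mathlib

open MvPolynomial

noncomputable section

abbrev P : Type := MvPolynomial (Fin 2 × Fin 2 × Fin 2) ℂ

/-- The action of a triple of SL₂(ℂ) matrices on the polynomial ring `P`,
as a ℂ-algebra homomorphism determined on variables by
`(A,B,C) · x_{ijk} = ∑ A_{i'i} B_{j'j} C_{k'k} x_{i'j'k'}`. -/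
def act (A B C : Matrix.SpecialLinearGroup (Fin 2) ℂ) : P →ₐ[ℂ] P :=
  MvPolynomial.aeval fun p =>
    ∑ i' : Fin 2, ∑ j' : Fin 2, ∑ k' : Fin 2,
      MvPolynomial.C (A.val i' p.1 * B.val j' p.2.1 * C.val k' p.2.2) *
        MvPolynomial.X (i', j', k')

/-- The variable `x_{ijk}`. -/
def x (i j k : Fin 2) : P := MvPolynomial.X (i, j, k)

/-- Cayley's hyperdeterminant of a 2×2×2 array. -/
def Det : P :=
  x 0 0 0 ^ 2 * x 1 1 1 ^ 2 + x 0 0 1 ^ 2 * x 1 1 0 ^ 2 +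
  x 0 1 0 ^ 2 * x 1 0 1 ^ 2 + x 0 1 1 ^ 2 * x 1 0 0 ^ 2 -
  2 * (x 0 0 0 * x 0 0 1 * x 1 1 0 * x 1 1 1 + x 0 0 0 * x 0 1 0 * x 1 0 1 * x 1 1 1 +
       x 0 0 0 * x 0 1 1 * x 1 0 0 * x 1 1 1 + x 0 0 1 * x 0 1 0 * x 1 0 1 * x 1 1 0 +
       x 0 0 1 * x 0 1 1 * x 1 0 0 * x 1 1 0 + x 0 1 0 * x 0 1 1 * x 1 0 0 * x 1 0 1) +
  4 * (x 0 0 0 * x 0 1 1 * x 1 0 1 * x 1 1 0 + x 0 0 1 * x 0 1 0 * x 1 0 0 * x 1 1 1)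

/-! ### Auxiliary scalar algebra -/

def detExpr (q000 q001 q010 q011 q100 q101 q110 q111 : ℂ) : ℂ :=
  q000^2*q111^2 + q001^2*q110^2 + q010^2*q101^2 + q011^2*q100^2
  - 2*(q000*q001*q110*q111 + q000*q010*q101*q111 + q000*q011*q100*q111
     + q001*q010*q101*q110 + q001*q011*q100*q110 + q010*q011*q100*q101)
  + 4*(q000*q011*q101*q110 + q001*q010*q100*q111)

lemma eval_Det (z : Fin 2 × Fin 2 × Fin 2 → ℂ) :
    eval z Det = detExpr (z (0,0,0)) (z (0,0,1)) (z (0,1,0)) (z (0,1,1))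
      (z (1,0,0)) (z (1,0,1)) (z (1,1,0)) (z (1,1,1)) := by
  simp [Det, x, detExpr]

lemma outer (p q r s : ℂ) (h : p * s - q * r = 0) :
    ∃ u0 u1 v0 v1 : ℂ, p = u0*v0 ∧ q = u0*v1 ∧ r = u1*v0 ∧ s = u1*v1 := by
  by_cases hp : p = 0
  · by_cases hq : q = 0
    · exact ⟨0, 1, r, s, by simp [hp], by simp [hq], by ring, by ring⟩
    · have hqr : q * r = 0 := by linear_combination s * hp - h
      have hr : r = 0 := by rcases mul_eq_zero.mp hqr with h1 | h1; exact absurd h1 hq; exact h1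
      exact ⟨q, s, 0, 1, by rw [hp]; ring, by ring, by rw [hr]; ring, by ring⟩
  · exact ⟨p, r, 1, q/p, by ring, by field_simp, by ring, by field_simp; linear_combination h⟩

lemma roots (a b c : ℂ) (h : b^2 - 4*a*c ≠ 0) :
    ∃ l0 m0 l1 m1 : ℂ, a*l0^2 + b*(l0*m0) + c*m0^2 = 0 ∧ a*l1^2 + b*(l1*m1) + c*m1^2 = 0 ∧
      l0*m1 - m0*l1 ≠ 0 := by
  by_cases ha : a = 0
  · have hb : b ≠ 0 := by intro h0; apply h; rw [ha, h0]; ring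
    exact ⟨1, 0, c, -b, by rw [ha]; ring, by rw [ha]; ring, by simpa using hb⟩
  · obtain ⟨r, hr⟩ := IsAlgClosed.exists_pow_nat_eq (b^2 - 4*a*c) (n := 2) (by norm_num)
    have hrne : r ≠ 0 := by intro h0; apply h; rw [← hr, h0]; ring
    refine ⟨-b + r, 2*a, -b - r, 2*a, by linear_combination a*hr, by linear_combination a*hr, ?_⟩
    have he : (-b+r)*(2*a) - (2*a)*(-b-r) = 4*(a*r) := by ring
    rw [he]
    exact mul_ne_zero (by norm_num) (mul_ne_zero ha hrne)

lemma detExpr_decomp (s t a0 a1 A0 A1 b0 b1 B0 B1 c0 c1 C0 C1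
    q000 q001 q010 q011 q100 q101 q110 q111 : ℂ)
    (h000 : q000 = s*a0*b0*c0 + t*A0*B0*C0) (h001 : q001 = s*a0*b0*c1 + t*A0*B0*C1)
    (h010 : q010 = s*a0*b1*c0 + t*A0*B1*C0) (h011 : q011 = s*a0*b1*c1 + t*A0*B1*C1)
    (h100 : q100 = s*a1*b0*c0 + t*A1*B0*C0) (h101 : q101 = s*a1*b0*c1 + t*A1*B0*C1)
    (h110 : q110 = s*a1*b1*c0 + t*A1*B1*C0) (h111 : q111 = s*a1*b1*c1 + t*A1*B1*C1) :
    detExpr q000 q001 q010 q011 q100 q101 q110 q111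
      = s^2*t^2*((a0*A1-a1*A0)*(b0*B1-b1*B0)*(c0*C1-c1*C0))^2 := by
  subst h000 h001 h010 h011 h100 h101 h110 h111
  simp only [detExpr]; ring

lemma combine (dE du dv : ℂ) (hdE : dE ≠ 0) (hdu : du ≠ 0) (hdv : dv ≠ 0)
    (z u v m w xx c : ℂ) (h : dE * z = u*v*m + w*xx*c) :
    z = 1*u*v*(m/dE) + du*dv/dE*(w/du)*(xx/dv)*c := by
  field_simp
  linear_combination h

lemma fin2 (dE D du dv : ℂ) (hdE : dE ≠ 0) (hKey : dE^2 * D = (du*dv)^2) :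
    D = 1^2*(du*dv/dE)^2 := by
  rw [div_pow, one_pow, one_mul, eq_div_iff (pow_ne_zero 2 hdE)]
  linear_combination hKey

lemma decompAux (z000 z001 z010 z011 z100 z101 z110 z111 : ℂ)
    (hD : detExpr z000 z001 z010 z011 z100 z101 z110 z111 ≠ 0) :
    ∃ s t a0 a1 A0 A1 b0 b1 B0 B1 c0 c1 C0 C1 : ℂ,
      a0*A1 - a1*A0 = 1 ∧ b0*B1 - b1*B0 = 1 ∧ c0*C1 - c1*C0 = 1 ∧
      z000 = s*a0*b0*c0 + t*A0*B0*C0 ∧ z001 = s*a0*b0*c1 + t*A0*B0*C1 ∧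
      z010 = s*a0*b1*c0 + t*A0*B1*C0 ∧ z011 = s*a0*b1*c1 + t*A0*B1*C1 ∧
      z100 = s*a1*b0*c0 + t*A1*B0*C0 ∧ z101 = s*a1*b0*c1 + t*A1*B0*C1 ∧
      z110 = s*a1*b1*c0 + t*A1*B1*C0 ∧ z111 = s*a1*b1*c1 + t*A1*B1*C1 ∧
      detExpr z000 z001 z010 z011 z100 z101 z110 z111 = s^2*t^2 := by
  have hI1 : detExpr z000 z001 z010 z011 z100 z101 z110 z111 =
      (z000*z111 + z110*z001 - z010*z101 - z100*z011)^2
      - 4*(z000*z110 - z010*z100)*(z001*z111 - z011*z101) := by simp only [detExpr]; ring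
  obtain ⟨l0, m0, l1, m1, hq0, hq1, hdE⟩ :=
    roots (z000*z110 - z010*z100) (z000*z111 + z110*z001 - z010*z101 - z100*z011)
      (z001*z111 - z011*z101) (by rw [← hI1]; exact hD)
  have h0 : (l0*z000 + m0*z001) * (l0*z110 + m0*z111)
      - (l0*z010 + m0*z011) * (l0*z100 + m0*z101) = 0 := by linear_combination hq0
  have h1 : (l1*z000 + m1*z001) * (l1*z110 + m1*z111)
      - (l1*z010 + m1*z011) * (l1*z100 + m1*z101) = 0 := by linear_combination hq1
  obtain ⟨u0, u1, v0, v1, e00, e01, e10, e11⟩ := outer _ _ _ _ h0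
  obtain ⟨w0, w1, x0, x1, f00, f01, f10, f11⟩ := outer _ _ _ _ h1
  have hscaled := detExpr_decomp 1 1 u0 u1 w0 w1 v0 v1 x0 x1 m1 (-l1) (-m0) l0
    ((l0*m1 - m0*l1)*z000) ((l0*m1 - m0*l1)*z001) ((l0*m1 - m0*l1)*z010)
    ((l0*m1 - m0*l1)*z011) ((l0*m1 - m0*l1)*z100) ((l0*m1 - m0*l1)*z101)
    ((l0*m1 - m0*l1)*z110) ((l0*m1 - m0*l1)*z111)
    (by linear_combination m1*e00 - m0*f00) (by linear_combination (-l1)*e00 + l0*f00)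
    (by linear_combination m1*e01 - m0*f01) (by linear_combination (-l1)*e01 + l0*f01)
    (by linear_combination m1*e10 - m0*f10) (by linear_combination (-l1)*e10 + l0*f10)
    (by linear_combination m1*e11 - m0*f11) (by linear_combination (-l1)*e11 + l0*f11)
  have hexpand : detExpr ((l0*m1 - m0*l1)*z000) ((l0*m1 - m0*l1)*z001) ((l0*m1 - m0*l1)*z010)
      ((l0*m1 - m0*l1)*z011) ((l0*m1 - m0*l1)*z100) ((l0*m1 - m0*l1)*z101)
      ((l0*m1 - m0*l1)*z110) ((l0*m1 - m0*l1)*z111)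
      = (l0*m1 - m0*l1)^4 * detExpr z000 z001 z010 z011 z100 z101 z110 z111 := by
    simp only [detExpr]; ring
  have hKey : (l0*m1 - m0*l1)^2 * detExpr z000 z001 z010 z011 z100 z101 z110 z111
      = ((u0*w1 - u1*w0)*(v0*x1 - v1*x0))^2 := by
    apply mul_left_cancel₀ (pow_ne_zero 2 hdE)
    rw [hexpand] at hscaled
    linear_combination hscaled
  have hdudv : (u0*w1 - u1*w0)*(v0*x1 - v1*x0) ≠ 0 := by
    intro h0'
    rw [h0'] at hKey
    exact (mul_ne_zero (pow_ne_zero 2 hdE) hD) (by linear_combination hKey)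
  have hdu : u0*w1 - u1*w0 ≠ 0 := fun h' => hdudv (by rw [h']; ring)
  have hdv : v0*x1 - v1*x0 ≠ 0 := fun h' => hdudv (by rw [h']; ring)
  refine ⟨1, (u0*w1 - u1*w0)*(v0*x1 - v1*x0)/(l0*m1 - m0*l1),
    u0, u1, w0/(u0*w1 - u1*w0), w1/(u0*w1 - u1*w0),
    v0, v1, x0/(v0*x1 - v1*x0), x1/(v0*x1 - v1*x0),
    m1/(l0*m1 - m0*l1), -l1/(l0*m1 - m0*l1), -m0, l0,
    by field_simp, by field_simp, by rw [div_mul_eq_mul_div, div_mul_eq_mul_div, ← sub_div, div_eq_one_iff_eq hdE]; ring,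
    combine _ _ _ hdE hdu hdv _ _ _ _ _ _ _ (by linear_combination m1*e00 - m0*f00),
    ?_,
    combine _ _ _ hdE hdu hdv _ _ _ _ _ _ _ (by linear_combination m1*e01 - m0*f01),
    ?_,
    combine _ _ _ hdE hdu hdv _ _ _ _ _ _ _ (by linear_combination m1*e10 - m0*f10),
    ?_,
    combine _ _ _ hdE hdu hdv _ _ _ _ _ _ _ (by linear_combination m1*e11 - m0*f11),
    ?_,
    fin2 _ _ _ _ hdE hKey⟩
  · have := combine _ _ _ hdE hdu hdv _ _ _ _ _ _ _
      (show (l0*m1 - m0*l1) * z001 = u0*v0*(-l1) + w0*x0*l0 by linear_combination (-l1)*e00 + l0*f00)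
    rw [this]
  · have := combine _ _ _ hdE hdu hdv _ _ _ _ _ _ _
      (show (l0*m1 - m0*l1) * z011 = u0*v1*(-l1) + w0*x1*l0 by linear_combination (-l1)*e01 + l0*f01)
    rw [this]
  · have := combine _ _ _ hdE hdu hdv _ _ _ _ _ _ _
      (show (l0*m1 - m0*l1) * z101 = u1*v0*(-l1) + w1*x0*l0 by linear_combination (-l1)*e10 + l0*f10)
    rw [this]
  · have := combine _ _ _ hdE hdu hdv _ _ _ _ _ _ _
      (show (l0*m1 - m0*l1) * z111 = u1*v1*(-l1) + w1*x1*l0 by linear_combination (-l1)*e11 + l0*f11)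
    rw [this]

/-! ### Decomposition with SL₂ matrices -/

lemma decomp (z : Fin 2 × Fin 2 × Fin 2 → ℂ) (hz : eval z Det ≠ 0) :
    ∃ (s t : ℂ) (A B C : Matrix.SpecialLinearGroup (Fin 2) ℂ),
      (∀ i j k : Fin 2, z (i, j, k) =
        s * A.val 0 i * B.val 0 j * C.val 0 k + t * A.val 1 i * B.val 1 j * C.val 1 k) ∧
      eval z Det = s ^ 2 * t ^ 2 := by
  rw [eval_Det] at hz
  obtain ⟨s, t, a0, a1, A0, A1, b0, b1, B0, B1, c0, c1, C0, C1,
    ha, hb, hc, h000, h001, h010, h011, h100, h101, h110, h111, hD⟩ :=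
    decompAux _ _ _ _ _ _ _ _ hz
  refine ⟨s, t,
    ⟨!![a0, a1; A0, A1], by rw [Matrix.det_fin_two_of]; linear_combination ha⟩,
    ⟨!![b0, b1; B0, B1], by rw [Matrix.det_fin_two_of]; linear_combination hb⟩,
    ⟨!![c0, c1; C0, C1], by rw [Matrix.det_fin_two_of]; linear_combination hc⟩, ?_, ?_⟩
  · intro i j k
    fin_cases i <;> fin_cases j <;> fin_cases k <;>
      simp only [Matrix.cons_val', Matrix.cons_val_zero, Matrix.cons_val_one,
        Matrix.head_cons, Matrix.head_fin_const, Matrix.empty_val',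
        Matrix.cons_val_fin_one] <;>
      assumption
  · rw [eval_Det]; exact hD

/-! ### Evaluation of the action -/

lemma aeval_eq_eval' (w : Fin 2 × Fin 2 × Fin 2 → ℂ) (g : P) : aeval w g = eval w g := by
  rw [aeval_def, Algebra.algebraMap_self]; rfl

lemma eval_act (A B C : Matrix.SpecialLinearGroup (Fin 2) ℂ) (w : Fin 2 × Fin 2 × Fin 2 → ℂ)
    (g : P) : eval w (act A B C g) =
    eval (fun p => ∑ i' : Fin 2, ∑ j' : Fin 2, ∑ k' : Fin 2,
      A.val i' p.1 * B.val j' p.2.1 * C.val k' p.2.2 * w (i', j', k')) g := by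
  rw [← aeval_eq_eval' w, ← aeval_eq_eval']
  have h : (aeval w : P →ₐ[ℂ] ℂ).comp (act A B C)
      = aeval (fun p => ∑ i' : Fin 2, ∑ j' : Fin 2, ∑ k' : Fin 2,
          A.val i' p.1 * B.val j' p.2.1 * C.val k' p.2.2 * w (i', j', k')) := by
    rw [act, comp_aeval]
    congr 1
    funext p
    simp
  calc aeval w (act A B C g) = ((aeval w : P →ₐ[ℂ] ℂ).comp (act A B C)) g := rfl
    _ = _ := by rw [h]

/-! ### The restriction to the GHZ line -/

def pt (s t : ℂ) : Fin 2 × Fin 2 × Fin 2 → ℂ := fun p =>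
  if p = (0,0,0) then s else if p = (1,1,1) then t else 0

def sub0 : Fin 2 × Fin 2 × Fin 2 → MvPolynomial (Fin 2) ℂ := fun p =>
  if p = (0,0,0) then X 0 else if p = (1,1,1) then X 1 else 0

def phi : P →ₐ[ℂ] MvPolynomial (Fin 2) ℂ := aeval sub0

set_option maxHeartbeats 4000000 in
lemma phi_act_diag (A : Matrix.SpecialLinearGroup (Fin 2) ℂ) (a d : ℂ)
    (hA : A.val = !![a,0;0,d]) (f : P) :
    phi (act A 1 1 f) = aeval ![C a * X 0, C d * X 1] (phi f) := by
  have h : phi.comp (act A 1 1)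
      = (aeval ![C a * X 0, C d * X 1] : MvPolynomial (Fin 2) ℂ →ₐ[ℂ] _).comp phi := by
    apply algHom_ext
    rintro ⟨i, j, k⟩
    fin_cases i <;> fin_cases j <;> fin_cases k <;>
      simp [act, phi, sub0, hA, Fin.sum_univ_two, Matrix.SpecialLinearGroup.coe_one,
        Matrix.one_apply, Prod.ext_iff]
  calc phi (act A 1 1 f) = (phi.comp (act A 1 1)) f := rfl
    _ = _ := by rw [h]; rfl

set_option maxHeartbeats 4000000 in
lemma phi_act_anti (A : Matrix.SpecialLinearGroup (Fin 2) ℂ)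
    (hA : A.val = !![0,-1;1,0]) (f : P) :
    phi (act A A A f) = aeval ![X 1, -X 0] (phi f) := by
  have h : phi.comp (act A A A)
      = (aeval ![X 1, -X 0] : MvPolynomial (Fin 2) ℂ →ₐ[ℂ] _).comp phi := by
    apply algHom_ext
    rintro ⟨i, j, k⟩
    fin_cases i <;> fin_cases j <;> fin_cases k <;>
      simp [act, phi, sub0, hA, Fin.sum_univ_two, Prod.ext_iff]
  calc phi (act A A A f) = (phi.comp (act A A A)) f := rfl
    _ = _ := by rw [h]; rfl

lemma eval_pt_phi (g : P) (s t : ℂ) : eval (pt s t) g = aeval ![s, t] (phi g) := by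
  rw [← aeval_eq_eval']
  have h : (aeval (pt s t) : P →ₐ[ℂ] ℂ)
      = (aeval ![s, t] : MvPolynomial (Fin 2) ℂ →ₐ[ℂ] ℂ).comp phi := by
    apply algHom_ext
    rintro ⟨i, j, k⟩
    fin_cases i <;> fin_cases j <;> fin_cases k <;>
      simp [phi, sub0, pt, Prod.ext_iff]
  rw [h]; rfl

/-! ### Coefficient analysis in two variables -/

def fsd (a b : ℕ) : Fin 2 →₀ ℕ := Finsupp.single 0 a + Finsupp.single 1 b

lemma fsd_apply_zero (a b : ℕ) : fsd a b 0 = a := by simp [fsd]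
lemma fsd_apply_one (a b : ℕ) : fsd a b 1 = b := by simp [fsd, Finsupp.single_apply]

lemma eq_fsd (d : Fin 2 →₀ ℕ) : d = fsd (d 0) (d 1) := by
  ext n
  fin_cases n <;> simp [fsd, Finsupp.single_apply]

lemma fsd_inj {a b a' b' : ℕ} (h : fsd a b = fsd a' b') : a = a' ∧ b = b' := by
  constructor
  · have := DFunLike.congr_fun h 0; simpa [fsd, Finsupp.single_apply] using this
  · have := DFunLike.congr_fun h 1; simpa [fsd, Finsupp.single_apply] using this

lemma monomial_eq_two (d : Fin 2 →₀ ℕ) (c : ℂ) :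
    monomial d c = C c * X 0 ^ (d 0) * X 1 ^ (d 1) := by
  conv_lhs => rw [eq_fsd d]
  rw [C_apply, X_pow_eq_monomial, X_pow_eq_monomial, monomial_mul, monomial_mul]
  simp [fsd]

lemma coeff_scale (a d' : ℂ) (g : MvPolynomial (Fin 2) ℂ) (e : Fin 2 →₀ ℕ) :
    coeff e (aeval ![C a * X 0, C d' * X 1] g) = a ^ (e 0) * d' ^ (e 1) * coeff e g := by
  conv_lhs => rw [← support_sum_monomial_coeff g]
  rw [map_sum, coeff_sum]
  have key : ∀ d : Fin 2 →₀ ℕ, ∀ c : ℂ,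
      aeval ![C a * X 0, C d' * X 1] (monomial d c)
        = monomial d (a ^ (d 0) * d' ^ (d 1) * c) := by
    intro d c
    rw [monomial_eq_two, map_mul, map_mul, map_pow, map_pow, aeval_X, aeval_X, aeval_C]
    rw [monomial_eq_two d (a ^ (d 0) * d' ^ (d 1) * c)]
    simp only [Matrix.cons_val_zero, Matrix.cons_val_one, Matrix.head_cons,
      algebraMap_eq, C_mul, C_pow]
    ring
  simp_rw [key, coeff_monomial]
  rw [Finset.sum_ite_eq' g.support e (fun d => a ^ (d 0) * d' ^ (d 1) * coeff d g)]
  split_ifs with h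
  · rfl
  · rw [notMem_support_iff.mp h]; ring

lemma coeff_flip (g : MvPolynomial (Fin 2) ℂ) (n : ℕ) :
    coeff (fsd n n) (aeval ![X 1, -X 0] g) = (-1 : ℂ) ^ n * coeff (fsd n n) g := by
  conv_lhs => rw [← support_sum_monomial_coeff g]
  rw [map_sum, coeff_sum]
  have key : ∀ d : Fin 2 →₀ ℕ, ∀ c : ℂ,
      aeval ![X 1, -X 0] (monomial d c)
        = monomial (fsd (d 1) (d 0)) ((-1 : ℂ) ^ (d 1) * c) := by
    intro d c
    rw [monomial_eq_two, map_mul, map_mul, map_pow, map_pow, aeval_X, aeval_X, aeval_C]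
    rw [monomial_eq_two (fsd (d 1) (d 0)) _, fsd_apply_zero, fsd_apply_one]
    simp only [Matrix.cons_val_zero, Matrix.cons_val_one, Matrix.head_cons,
      algebraMap_eq, C_mul, C_pow, map_neg, map_one]
    rw [neg_pow]
    ring
  simp_rw [key, coeff_monomial]
  rw [Finset.sum_eq_single (fsd n n)]
  · simp [fsd_apply_zero, fsd_apply_one]
  · intro d _ hne
    rw [if_neg]
    intro h'
    obtain ⟨h1, h0⟩ := fsd_inj h'
    exact hne (by rw [eq_fsd d, h1, h0])
  · intro h
    rw [notMem_support_iff.mp h]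
    split_ifs <;> ring

lemma support_diag (g : MvPolynomial (Fin 2) ℂ)
    (hg : aeval ![C 2 * X 0, C 2⁻¹ * X 1] g = g) : ∀ d ∈ g.support, d 0 = d 1 := by
  intro d hd
  have h := coeff_scale 2 2⁻¹ g d
  rw [hg] at h
  have hc : coeff d g ≠ 0 := mem_support_iff.mp hd
  have hw : (2:ℂ) ^ (d 0) * (2⁻¹ : ℂ) ^ (d 1) = 1 := by
    have h1 : ((2:ℂ) ^ (d 0) * (2⁻¹ : ℂ) ^ (d 1) - 1) * coeff d g = 0 := by
      linear_combination -h
    rcases mul_eq_zero.mp h1 with h2 | h2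
    · linear_combination h2
    · exact absurd h2 hc
  rw [inv_pow, ← div_eq_mul_inv, div_eq_one_iff_eq (pow_ne_zero _ two_ne_zero)] at hw
  have : (2:ℕ) ^ (d 0) = 2 ^ (d 1) := by exact_mod_cast hw
  exact Nat.pow_right_injective (le_refl 2) this

lemma odd_coeff_zero (g : MvPolynomial (Fin 2) ℂ)
    (hg : aeval ![X 1, -X 0] g = g) (n : ℕ) (hn : Odd n) : coeff (fsd n n) g = 0 := by
  have h := coeff_flip g n
  rw [hg, hn.neg_one_pow] at h
  linear_combination h / 2

lemma exists_Q (g : MvPolynomial (Fin 2) ℂ)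
    (h2 : aeval ![C 2 * X 0, C 2⁻¹ * X 1] g = g)
    (hflip : aeval ![X 1, -X 0] g = g) :
    ∃ Q : Polynomial ℂ,
      Polynomial.aeval ((X 0 * X 1 : MvPolynomial (Fin 2) ℂ) ^ 2) Q = g := by
  refine ⟨∑ d ∈ g.support, Polynomial.C (coeff d g) * Polynomial.X ^ (d 0 / 2), ?_⟩
  rw [map_sum]
  conv_rhs => rw [← support_sum_monomial_coeff g]
  refine Finset.sum_congr rfl fun d hd => ?_
  have hdd : d 0 = d 1 := support_diag g h2 d hd
  have heven : Even (d 0) := by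
    rcases Nat.even_or_odd (d 0) with he | ho
    · exact he
    · exfalso
      apply mem_support_iff.mp hd
      have hde : d = fsd (d 0) (d 0) := by conv_lhs => rw [eq_fsd d, ← hdd]
      rw [hde]
      exact odd_coeff_zero g hflip (d 0) ho
  have h2d : 2 * (d 0 / 2) = d 0 := Nat.mul_div_cancel' heven.two_dvd
  rw [map_mul, Polynomial.aeval_C, map_pow, Polynomial.aeval_X, ← pow_mul, h2d,
    mul_pow, monomial_eq_two, ← hdd, algebraMap_eq, mul_assoc]

/-! ### The two special group elements -/

def A2 : Matrix.SpecialLinearGroup (Fin 2) ℂ :=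
  ⟨!![(2:ℂ), 0; 0, 2⁻¹], by rw [Matrix.det_fin_two_of]; norm_num⟩

def Jm : Matrix.SpecialLinearGroup (Fin 2) ℂ :=
  ⟨!![(0:ℂ), -1; 1, 0], by rw [Matrix.det_fin_two_of]; norm_num⟩

/-! ### Main theorem -/

/-- Every invariant polynomial is a polynomial in Cayley's hyperdeterminant. -/
theorem invariants_generated_by_hyperdeterminant (f : P)
    (hinv : ∀ A B C : Matrix.SpecialLinearGroup (Fin 2) ℂ, act A B C f = f) :
    f ∈ Algebra.adjoin ℂ ({Det} : Set P) := by
  have h2 : aeval ![C 2 * X 0, C 2⁻¹ * X 1] (phi f) = phi f := by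
    rw [← phi_act_diag A2 2 2⁻¹ rfl f, hinv]
  have hflip : aeval ![X 1, -X 0] (phi f) = phi f := by
    rw [← phi_act_anti Jm rfl f, hinv]
  obtain ⟨Q, hQ⟩ := exists_Q (phi f) h2 hflip
  have hmem : Polynomial.aeval Det Q ∈ Algebra.adjoin ℂ ({Det} : Set P) := by
    rw [Algebra.adjoin_singleton_eq_range_aeval]
    exact ⟨Q, rfl⟩
  suffices hfF : f = Polynomial.aeval Det Q by rw [hfF]; exact hmem
  have hevF : ∀ z : Fin 2 × Fin 2 × Fin 2 → ℂ,
      eval z (Polynomial.aeval Det Q) = Polynomial.eval (eval z Det) Q := by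
    intro z
    rw [← aeval_eq_eval' z, ← Polynomial.aeval_algHom_apply (aeval z : P →ₐ[ℂ] ℂ) Det Q,
      aeval_eq_eval' z]
    exact congrFun (Polynomial.coe_aeval_eq_eval _) Q
  have hevf : ∀ s t : ℂ, eval (pt s t) f = Polynomial.eval ((s*t)^2) Q := by
    intro s t
    rw [eval_pt_phi f s t, ← hQ,
      ← Polynomial.aeval_algHom_apply
        (aeval ![s, t] : MvPolynomial (Fin 2) ℂ →ₐ[ℂ] ℂ) _ Q]
    have h1 : (aeval ![s, t]) ((X 0 * X 1 : MvPolynomial (Fin 2) ℂ) ^ 2) = (s*t)^2 := by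
      simp
    rw [h1]
    exact congrFun (Polynomial.coe_aeval_eq_eval _) Q
  have hzero : ∀ z : Fin 2 × Fin 2 × Fin 2 → ℂ,
      eval z (Det * (f - Polynomial.aeval Det Q)) = 0 := by
    intro z
    rw [map_mul, map_sub]
    by_cases hz : eval z Det = 0
    · rw [hz]; ring
    · obtain ⟨s, t, A, B, C, hd, hst⟩ := decomp z hz
      have h1 : eval z f = eval (pt s t) f := by
        have he := eval_act A B C (pt s t) f
        rw [hinv A B C] at he
        have hfun : (fun p : Fin 2 × Fin 2 × Fin 2 =>
            ∑ i' : Fin 2, ∑ j' : Fin 2, ∑ k' : Fin 2,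
              A.val i' p.1 * B.val j' p.2.1 * C.val k' p.2.2 * pt s t (i', j', k')) = z := by
          funext p
          obtain ⟨i, j, k⟩ := p
          rw [hd i j k]
          simp only [Fin.sum_univ_two, pt, Prod.ext_iff]
          norm_num
          ring
        rw [hfun] at he
        exact he.symm
      rw [hevF z, h1, hevf s t, hst, mul_pow]
      ring
  have hprod : Det * (f - Polynomial.aeval Det Q) = 0 := by
    apply MvPolynomial.funext
    intro z
    rw [hzero z, map_zero]
  have hDetne : (Det : P) ≠ 0 := by
    intro h0
    have h1 : eval (pt 1 1) Det = 0 := by rw [h0, map_zero]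
    rw [eval_Det] at h1
    simp [pt, detExpr, Prod.ext_iff] at h1
  rcases mul_eq_zero.mp hprod with h | h
  · exact absurd h hDetne
  · exact sub_eq_zero.mp h
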